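/- Let r_0 = r_0(γ) > 1 be defined implicitly by ∏_{n=0}^{N} r_n = κγ + 1 for fixed N ≥ 1, κ > 0, where r_i = 1 + ln r_{i−1}. Then as γ → ∞: (a) r_n → ∞ for every 0 ≤ n ≤ N; (b) γ/r_n → ∞ for every n; and (c) r_{n+1}/r_n = (1 + ln r_n)/r_n → 0 for every n. -/

import Mathlib

open Filter Real

theorem high_snr_ratio_properties (N : ℕ) (hN : 1 ≤ N) (κ : ℝ) (hκ : 0 < κ)
    (r : ℝ → ℕ → ℝ)
    (h0 : ∀ γ : ℝ, 0 < γ → 1 < r γ 0)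
    (hrec : ∀ γ : ℝ, 0 < γ → ∀ i : ℕ, r γ (i + 1) = 1 + Real.log (r γ i))
    (hprod : ∀ γ : ℝ, 0 < γ → ∏ n ∈ Finset.range (N + 1), r γ n = κ * γ + 1) :
    (∀ n ≤ N, Filter.Tendsto (fun γ => r γ n) Filter.atTop Filter.atTop) ∧
    (∀ n ≤ N, Filter.Tendsto (fun γ => γ / r γ n) Filter.atTop Filter.atTop) ∧
    (∀ n ≤ N, Filter.Tendsto (fun γ => (1 + Real.log (r γ n)) / r γ n)
      Filter.atTop (nhds 0)) := by
  -- all iterates stay above 1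
  have hgt : ∀ γ : ℝ, 0 < γ → ∀ n, 1 < r γ n := by
    intro γ hγ n
    induction n with
    | zero => exact h0 γ hγ
    | succ k ih =>
      rw [hrec γ hγ k]
      have := Real.log_pos ih
      linarith
  -- the sequence is nonincreasing, so bounded by r γ 0
  have hdec : ∀ γ : ℝ, 0 < γ → ∀ n, r γ n ≤ r γ 0 := by
    intro γ hγ n
    induction n with
    | zero => exact le_rfl
    | succ k ih =>
      rw [hrec γ hγ k]
      have h1 : Real.log (r γ k) ≤ r γ k - 1 :=
        Real.log_le_sub_one_of_pos (lt_trans one_pos (hgt γ hγ k))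
      linarith
  -- (a) for n = 0
  have ha0 : Tendsto (fun γ => r γ 0) atTop atTop := by
    have hlin : Tendsto (fun γ : ℝ => κ * γ + 1) atTop atTop :=
      tendsto_atTop_add_const_right _ 1 (tendsto_id.const_mul_atTop hκ)
    have hg : Tendsto (fun γ : ℝ => (κ * γ + 1) ^ ((N + 1 : ℝ))⁻¹) atTop atTop :=
      (tendsto_rpow_atTop (by positivity)).comp hlin
    apply tendsto_atTop_mono' atTop ?_ hg
    filter_upwards [eventually_gt_atTop 0] with γ hγ
    have hr0 : 0 < r γ 0 := lt_trans one_pos (h0 γ hγ)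
    have hx : κ * γ + 1 ≤ (r γ 0) ^ (N + 1) := by
      rw [← hprod γ hγ]
      calc ∏ n ∈ Finset.range (N + 1), r γ n
          ≤ ∏ _n ∈ Finset.range (N + 1), r γ 0 :=
            Finset.prod_le_prod (fun i _ => le_of_lt (lt_trans one_pos (hgt γ hγ i)))
              (fun i _ => hdec γ hγ i)
        _ = (r γ 0) ^ (N + 1) := by simp
    have hpos : (0 : ℝ) ≤ κ * γ + 1 := by positivity
    calc (κ * γ + 1) ^ ((N + 1 : ℝ))⁻¹ ≤ ((r γ 0) ^ (N + 1)) ^ ((N + 1 : ℝ))⁻¹ :=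
          Real.rpow_le_rpow hpos hx (by positivity)
      _ = r γ 0 := by
          rw [← Real.rpow_natCast (r γ 0) (N + 1), ← Real.rpow_mul hr0.le]
          push_cast
          rw [mul_inv_cancel₀ (by positivity), Real.rpow_one]
  -- (a) for all n
  have ha : ∀ n, Tendsto (fun γ => r γ n) atTop atTop := by
    intro n
    induction n with
    | zero => exact ha0
    | succ k ih =>
      have heq : (fun γ => 1 + Real.log (r γ k)) =ᶠ[atTop] (fun γ => r γ (k + 1)) := by
        filter_upwards [eventually_gt_atTop 0] with γ hγ using (hrec γ hγ k).symm
      exact Tendsto.congr' heq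
        (tendsto_atTop_add_const_left _ 1 (Real.tendsto_log_atTop.comp ih))
  -- (c): (1 + log x)/x → 0 as x → ∞
  have hc0 : Tendsto (fun x : ℝ => (1 + Real.log x) / x) atTop (nhds 0) := by
    have h1 : Tendsto (fun x : ℝ => x⁻¹) atTop (nhds 0) := tendsto_inv_atTop_zero
    have h2 : Tendsto (fun x : ℝ => Real.log x / x) atTop (nhds 0) :=
      Real.isLittleO_log_id_atTop.tendsto_div_nhds_zero
    have := h1.add h2
    simp only [add_zero] at this
    refine this.congr' ?_
    filter_upwards [eventually_gt_atTop (0 : ℝ)] with x hx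
    field_simp
  -- (b) for n = 0
  have hb0 : Tendsto (fun γ => γ / r γ 0) atTop atTop := by
    have hlow : Tendsto (fun γ => (r γ 1 - 1) / κ) atTop atTop := by
      apply Tendsto.atTop_div_const hκ
      exact tendsto_atTop_add_const_right _ (-1) (ha 1) |>.congr (fun γ => by ring)
    apply tendsto_atTop_mono' atTop ?_ hlow
    filter_upwards [eventually_gt_atTop 0] with γ hγ
    have h0' := hgt γ hγ 0
    have h1' := hgt γ hγ 1
    have hsplit : (∏ n ∈ Finset.range 2, r γ n) * ∏ n ∈ Finset.Ico 2 (N + 1), r γ n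
        = ∏ n ∈ Finset.range (N + 1), r γ n :=
      Finset.prod_range_mul_prod_Ico _ (by omega)
    have hIco : (1 : ℝ) ≤ ∏ n ∈ Finset.Ico 2 (N + 1), r γ n := by
      have := Finset.prod_le_prod (f := fun _ : ℕ => (1 : ℝ)) (g := fun n => r γ n)
        (s := Finset.Ico 2 (N + 1)) (fun i _ => zero_le_one)
        (fun i _ => le_of_lt (hgt γ hγ i))
      simpa using this
    have hprod2 : r γ 0 * r γ 1 ≤ κ * γ + 1 := by
      have h2 : ∏ n ∈ Finset.range 2, r γ n = r γ 0 * r γ 1 := by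
        simp [Finset.prod_range_succ]
      nlinarith [hprod γ hγ, hsplit, mul_pos (lt_trans one_pos h0') (lt_trans one_pos h1')]
    rw [div_le_div_iff₀ hκ (lt_trans one_pos h0')]
    nlinarith
  -- assemble
  refine ⟨fun n _ => ha n, fun n hn => ?_, fun n _ => hc0.comp (ha n)⟩
  apply tendsto_atTop_mono' atTop ?_ hb0
  filter_upwards [eventually_gt_atTop 0] with γ hγ
  exact div_le_div_of_nonneg_left hγ.le (lt_trans one_pos (hgt γ hγ n)) (hdec γ hγ n)
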